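/- Let G be a finite simple graph and u a vertex. The number of non-induced 'bowtie' subgraphs in which u is the center (the vertex shared by the two triangles) equals (T(u) choose 2) − D₃(u), where T(u) is the number of triangles containing u and D₃(u) is the number of non-induced diamonds in which u is a degree-3 vertex. -/

import Mathlib

private lemma finset_pair_eq_pair_iff {α : Type*} [DecidableEq α] {a b c d : α}
    (h : ({a, b} : Finset α) = {c, d}) : (a = c ∧ b = d) ∨ (a = d ∧ b = c) := by
  have h' : ({a, b} : Set α) = {c, d} := by
    have := Finset.coe_inj.mpr h
    simpa using this
  rw [Set.pair_eq_pair_iff] at h'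
  exact h'

private lemma pair_of_mem {α : Type*} [DecidableEq α] (s : Finset α)
    (hs : s.card = 2) (v : α) (hv : v ∈ s) : ∃ a, a ≠ v ∧ s = {v, a} := by
  obtain ⟨x, y, hxy, rfl⟩ := Finset.card_eq_two.mp hs
  rcases Finset.mem_insert.mp hv with rfl | hv
  · exact ⟨y, fun h => hxy h.symm, rfl⟩
  · rcases Finset.mem_singleton.mp hv with rfl
    exact ⟨x, hxy, Finset.pair_comm x v⟩

private lemma pair_key {α : Type*} [DecidableEq α] {v w a b c d : α}
    (hab : a ≠ b) (hva : v ≠ a) (hvb : v ≠ b) (hwc : w ≠ c) (hwd : w ≠ d)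
    (h1 : ({v, a} : Finset α) = {w, c}) (h2 : ({v, b} : Finset α) = {w, d}) :
    v = w ∧ ({a, b} : Finset α) = {c, d} := by
  rcases finset_pair_eq_pair_iff h1 with ⟨hvw, hac⟩ | ⟨hvc, haw⟩
  · subst hvw; subst hac
    rcases finset_pair_eq_pair_iff h2 with ⟨-, hbd⟩ | ⟨hvd, hbv⟩
    · subst hbd; exact ⟨rfl, rfl⟩
    · exact absurd hvd hwd
  · subst hvc; subst haw
    rcases finset_pair_eq_pair_iff h2 with ⟨hvw', -⟩ | ⟨-, hba⟩
    · exact absurd hvw' hva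
    · exact absurd hba hab.symm

/-- The number of bowties with center `u` equals `C(T(u),2) − D₃(u)`, where
`T(u)` is the number of triangles containing `u` and `D₃(u)` is the number of
diamonds in which `u` is a degree-3 (chord) vertex. -/
theorem bowtie_center_count {V : Type*} [Fintype V] [DecidableEq V]
    (G : SimpleGraph V) [DecidableRel G.Adj] (u : V) :
    -- triangles containing u, recorded by their two non-u vertices
    let Tri : Finset (Finset V) := ((G.neighborFinset u).powersetCard 2).filter
        (fun s => ∀ a ∈ s, ∀ b ∈ s, a ≠ b → G.Adj a b)
    -- D₃(u): diamonds with chord (u,v): v ∈ N(u) together with a 2-set of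
    -- common neighbors of u and v
    let D3 : ℕ := ((G.neighborFinset u ×ˢ
        (Finset.univ : Finset V).powersetCard 2).filter
      (fun q => ∀ a ∈ q.2, G.Adj u a ∧ G.Adj q.1 a)).card
    -- bowties centered at u: unordered pairs of triangles through u whose
    -- non-u vertex sets are disjoint
    let Bow : ℕ := ((Tri.powersetCard 2).filter
        (fun t => ∀ s ∈ t, ∀ s' ∈ t, s ≠ s' → s ∩ s' = ∅)).card
    (Bow : ℤ) = (Tri.card.choose 2 : ℤ) - (D3 : ℤ) := by
  intro Tri D3 Bow
  have hTriMem : ∀ s, s ∈ Tri ↔ s ⊆ G.neighborFinset u ∧ s.card = 2 ∧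
      ∀ a ∈ s, ∀ b ∈ s, a ≠ b → G.Adj a b := by
    intro s
    simp [Tri, Finset.mem_filter, Finset.mem_powersetCard, and_assoc]
  have hTriPair : ∀ v a : V, G.Adj u v → G.Adj u a → G.Adj v a →
      ({v, a} : Finset V) ∈ Tri := by
    intro v a huv hua hva
    rw [hTriMem]
    refine ⟨?_, ?_, ?_⟩
    · intro x hx
      rcases Finset.mem_insert.mp hx with rfl | hx
      · exact (G.mem_neighborFinset u x).mpr huv
      · rcases Finset.mem_singleton.mp hx with rfl
        exact (G.mem_neighborFinset u x).mpr hua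
    · exact Finset.card_pair hva.ne
    · intro x hx y hy hxy
      rcases Finset.mem_insert.mp hx with rfl | hx
      · rcases Finset.mem_insert.mp hy with rfl | hy
        · exact absurd rfl hxy
        · rcases Finset.mem_singleton.mp hy with rfl
          exact hva
      · rcases Finset.mem_singleton.mp hx with rfl
        rcases Finset.mem_insert.mp hy with rfl | hy
        · exact hva.symm
        · rcases Finset.mem_singleton.mp hy with rfl
          exact absurd rfl hxy
  have hsplit : Bow + ((Tri.powersetCard 2).filter
      (fun t => ¬ ∀ s ∈ t, ∀ s' ∈ t, s ≠ s' → s ∩ s' = ∅)).card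
      = Tri.card.choose 2 := by
    rw [← Finset.card_powersetCard 2 Tri]
    exact Finset.card_filter_add_card_filter_not _
  have hX : ((Tri.powersetCard 2).filter
      (fun t => ¬ ∀ s ∈ t, ∀ s' ∈ t, s ≠ s' → s ∩ s' = ∅)).card = D3 := by
    symm
    apply Finset.card_bij
      (fun q _ => q.2.image (fun x => ({q.1, x} : Finset V)))
    · -- maps into the target
      rintro ⟨v, p⟩ hq
      simp only [Finset.mem_filter, Finset.mem_product, Finset.mem_powersetCard,
        SimpleGraph.mem_neighborFinset] at hq
      obtain ⟨⟨hv, -, hp2⟩, hadj⟩ := hq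
      obtain ⟨a, b, hab, rfl⟩ := Finset.card_eq_two.mp hp2
      have hua : G.Adj u a := (hadj a (by simp)).1
      have hub : G.Adj u b := (hadj b (by simp)).1
      have hva : G.Adj v a := (hadj a (by simp)).2
      have hvb : G.Adj v b := (hadj b (by simp)).2
      have himg : ({a, b} : Finset V).image (fun x => ({v, x} : Finset V))
          = {({v, a} : Finset V), {v, b}} := by
        simp [Finset.image_insert]
      rw [himg]
      have hne : ({v, a} : Finset V) ≠ {v, b} := by
        intro h
        have : a ∈ ({v, b} : Finset V) := h ▸ (by simp)
        rcases Finset.mem_insert.mp this with rfl | h'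
        · exact hva.ne' rfl
        · exact hab (Finset.mem_singleton.mp h')
      simp only [Finset.mem_filter, Finset.mem_powersetCard]
      refine ⟨⟨?_, ?_⟩, ?_⟩
      · intro s hs
        rcases Finset.mem_insert.mp hs with rfl | hs
        · exact hTriPair v a hv hua hva
        · rcases Finset.mem_singleton.mp hs with rfl
          exact hTriPair v b hv hub hvb
      · exact Finset.card_pair hne
      · push_neg
        refine ⟨{v, a}, by simp, {v, b}, by simp, hne, ?_⟩
        rw [Finset.nonempty_iff_ne_empty]
        intro h
        have : v ∈ ({v, a} : Finset V) ∩ {v, b} := by simp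
        rw [h] at this
        exact absurd this (Finset.notMem_empty v)
    · -- injective
      rintro ⟨v, p⟩ hq ⟨w, r⟩ hq' heq
      simp only [Finset.mem_filter, Finset.mem_product, Finset.mem_powersetCard,
        SimpleGraph.mem_neighborFinset] at hq hq'
      obtain ⟨⟨hv, -, hp2⟩, hadj⟩ := hq
      obtain ⟨⟨hw, -, hr2⟩, hadj'⟩ := hq'
      obtain ⟨a, b, hab, rfl⟩ := Finset.card_eq_two.mp hp2
      obtain ⟨c, d, hcd, rfl⟩ := Finset.card_eq_two.mp hr2
      have hva : G.Adj v a := (hadj a (by simp)).2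
      have hvb : G.Adj v b := (hadj b (by simp)).2
      have hwc : G.Adj w c := (hadj' c (by simp)).2
      have hwd : G.Adj w d := (hadj' d (by simp)).2
      simp only [Finset.image_insert, Finset.image_singleton] at heq
      rcases finset_pair_eq_pair_iff heq with ⟨h1, h2⟩ | ⟨h1, h2⟩
      · obtain ⟨rfl, h3⟩ := pair_key hab hva.ne hvb.ne hwc.ne hwd.ne h1 h2
        rw [Prod.mk.injEq]
        exact ⟨rfl, h3⟩
      · obtain ⟨rfl, h3⟩ := pair_key hab hva.ne hvb.ne hwd.ne hwc.ne h1 h2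
        rw [Prod.mk.injEq]
        exact ⟨rfl, h3.trans (Finset.pair_comm d c)⟩
    · -- surjective
      intro t ht
      simp only [Finset.mem_filter, Finset.mem_powersetCard] at ht
      obtain ⟨⟨htTri, ht2⟩, hnp⟩ := ht
      push_neg at hnp
      obtain ⟨s, hs, s', hs', hss', hint⟩ := hnp
      obtain ⟨v, hvmem⟩ := hint
      have hvs : v ∈ s := (Finset.mem_inter.mp hvmem).1
      have hvs' : v ∈ s' := (Finset.mem_inter.mp hvmem).2
      have hsTri := htTri hs
      have hs'Tri := htTri hs'
      rw [hTriMem] at hsTri hs'Tri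
      obtain ⟨hsub, hsc, hsadj⟩ := hsTri
      obtain ⟨hsub', hsc', hsadj'⟩ := hs'Tri
      obtain ⟨a, hav, rfl⟩ := pair_of_mem s hsc v hvs
      obtain ⟨b, hbv, rfl⟩ := pair_of_mem s' hsc' v hvs'
      have hab : a ≠ b := by
        intro h; subst h; exact hss' rfl
      refine ⟨(v, {a, b}), ?_, ?_⟩
      · simp only [Finset.mem_filter, Finset.mem_product, Finset.mem_powersetCard,
          SimpleGraph.mem_neighborFinset]
        refine ⟨⟨(G.mem_neighborFinset u v).mp (hsub (Finset.mem_insert_self v {a})),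
          Finset.subset_univ _, Finset.card_pair hab⟩, ?_⟩
        intro x hx
        rcases Finset.mem_insert.mp hx with rfl | hx
        · exact ⟨(G.mem_neighborFinset u x).mp (hsub (by simp)),
            hsadj v (by simp) x (by simp) (Ne.symm hav)⟩
        · rcases Finset.mem_singleton.mp hx with rfl
          exact ⟨(G.mem_neighborFinset u x).mp (hsub' (by simp)),
            hsadj' v (by simp) x (by simp) (Ne.symm hbv)⟩
      · have himg : ({a, b} : Finset V).image (fun x => ({v, x} : Finset V))
            = {({v, a} : Finset V), {v, b}} := by
          simp [Finset.image_insert]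
        rw [himg]
        have hsub2 : ({({v, a} : Finset V), {v, b}} : Finset (Finset V)) ⊆ t := by
          intro x hx
          rcases Finset.mem_insert.mp hx with rfl | hx
          · exact hs
          · rcases Finset.mem_singleton.mp hx with rfl
            exact hs'
        apply Finset.eq_of_subset_of_card_le hsub2
        rw [ht2, Finset.card_pair hss']
  have hnat : Bow + D3 = Tri.card.choose 2 := hX ▸ hsplit
  push_cast [← hnat]
  ring
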